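/- Every σ-invariant ergodic Borel probability measure on Σ is either the Dirac measure at the constant-0 sequence or the Dirac measure at the constant-1 sequence. -/

import Mathlib

open MeasureTheory ENNReal

/-- The left shift on `{0,1}^ℕ`. -/
def shiftB (w : ℕ → Fin 2) : ℕ → Fin 2 := fun n => w (n + 1)

/-- The set `A`: sequences with `w(i) = w(i+1)` whenever `k³ ≤ i < (k+1)³ − 1`
for some `k ≥ 1`. -/
def setA : Set (ℕ → Fin 2) :=
  {w | ∀ k, 1 ≤ k → ∀ i, k ^ 3 ≤ i → i < (k + 1) ^ 3 - 1 → w i = w (i + 1)}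

/-- `Σ`: the closure of `∪_{l ≥ 0} σ^l A` in the product topology. -/
def SigmaSet : Set (ℕ → Fin 2) := closure (⋃ l : ℕ, shiftB^[l] '' setA)

lemma shiftB_iterate (l : ℕ) (v : ℕ → Fin 2) (n : ℕ) : shiftB^[l] v n = v (n + l) := by
  induction l generalizing v n with
  | zero => rfl
  | succ m ih =>
    rw [Function.iterate_succ_apply, ih (shiftB v) n]
    simp [shiftB]
    ring_nf

lemma cube_add (a d : ℕ) : a ^ 3 + d ^ 3 ≤ (a + d) ^ 3 := by
  have h : (a + d) ^ 3 = a ^ 3 + d ^ 3 + (3 * a ^ 2 * d + 3 * a * d ^ 2) := by ring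
  rw [h]
  exact Nat.le_add_right _ _

/-- Combinatorial core: any window of length `n³` of a shifted point of `A`
contains at most `n+1` switches. -/
lemma cnt_A (v : ℕ → Fin 2) (hv : v ∈ setA) (l n : ℕ) :
    ((Finset.range (n ^ 3)).filter (fun i => v (i + l) ≠ v (i + l + 1))).card ≤ n + 1 := by
  rcases Nat.eq_zero_or_pos n with rfl | hn
  · simp
  have hex : ∃ k, l + 1 ≤ k ^ 3 := ⟨l + 1, Nat.le_self_pow (by norm_num) _⟩
  set k0 := Nat.find hex with hk0def
  have hk0 : l + 1 ≤ k0 ^ 3 := Nat.find_spec hex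
  have hk0min : ∀ k, k < k0 → ¬ (l + 1 ≤ k ^ 3) := fun k hk => Nat.find_min hex hk
  set F := (Finset.range (n ^ 3)).filter (fun i => v (i + l) ≠ v (i + l + 1)) with hF
  have key : ∀ i ∈ F, i + l = 0 ∨ ∃ K, 2 ≤ K ∧ i + l + 1 = K ^ 3 := by
    intro i hi
    simp only [hF, Finset.mem_filter, Finset.mem_range] at hi
    obtain ⟨hiN, hne⟩ := hi
    by_cases hj : i + l = 0
    · exact Or.inl hj
    right
    set j := i + l with hjdef
    have hj1 : 1 ≤ j := Nat.one_le_iff_ne_zero.mpr hj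
    set K' := Nat.findGreatest (fun k => k ^ 3 ≤ j) j with hK'def
    have hP1 : (1 : ℕ) ^ 3 ≤ j := by simpa using hj1
    have hK'ge1 : 1 ≤ K' := Nat.le_findGreatest (P := fun k => k ^ 3 ≤ j) hj1 hP1
    have hK'le : K' ^ 3 ≤ j := Nat.findGreatest_spec (P := fun k => k ^ 3 ≤ j) hj1 hP1
    have hgt : ¬ (K' + 1) ^ 3 ≤ j := by
      intro hle
      have hKb : K' + 1 ≤ j := le_trans (Nat.le_self_pow (by norm_num) _) hle
      exact Nat.findGreatest_is_greatest (P := fun k => k ^ 3 ≤ j)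
        (Nat.lt_succ_self K') hKb hle
    have hnotlt : ¬ (j < (K' + 1) ^ 3 - 1) := by
      intro hlt
      exact hne (hv K' hK'ge1 j hK'le hlt)
    refine ⟨K' + 1, by omega, ?_⟩
    have h1 : 1 ≤ (K' + 1) ^ 3 := Nat.one_le_pow _ _ (by omega)
    omega
  have hmap : ∀ i ∈ F, (if i + l = 0 then 0 else i + l + 1) ∈
      insert 0 ((Finset.Icc k0 (k0 + n - 1)).image (fun k => k ^ 3)) := by
    intro i hi
    rcases key i hi with h0 | ⟨K, hK2, hKeq⟩
    · simp [h0]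
    have hiN : i < n ^ 3 := by
      have := Finset.mem_filter.mp hi
      simpa using (Finset.mem_range.mp this.1)
    have hne0 : ¬ (i + l = 0) := by
      intro h0
      rw [h0] at hKeq
      have : 2 ^ 3 ≤ K ^ 3 := Nat.pow_le_pow_left hK2 3
      omega
    rw [if_neg hne0]
    refine Finset.mem_insert_of_mem (Finset.mem_image.mpr ⟨K, ?_, hKeq.symm⟩)
    have hKge : k0 ≤ K := by
      by_contra hlt
      exact hk0min K (by omega) (by omega)
    have hKub : K ^ 3 ≤ l + n ^ 3 := by omega
    have hcube : k0 ^ 3 + (K - k0) ^ 3 ≤ K ^ 3 := by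
      have := cube_add k0 (K - k0)
      rwa [Nat.add_sub_cancel' hKge] at this
    have hdlt : (K - k0) ^ 3 < n ^ 3 := by omega
    have hd : K - k0 < n := by
      by_contra hge
      exact absurd (Nat.pow_le_pow_left (by omega : n ≤ K - k0) 3) (by omega)
    exact Finset.mem_Icc.mpr ⟨hKge, by omega⟩
  have hinj : Set.InjOn (fun i => if i + l = 0 then 0 else i + l + 1) F := by
    intro a _ b _ hab
    simp only at hab
    split_ifs at hab <;> omega
  calc F.card ≤ (insert 0 ((Finset.Icc k0 (k0 + n - 1)).image (fun k => k ^ 3))).card :=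
        Finset.card_le_card_of_injOn _ hmap hinj
    _ ≤ ((Finset.Icc k0 (k0 + n - 1)).image (fun k => k ^ 3)).card + 1 :=
        Finset.card_insert_le _ _
    _ ≤ (Finset.Icc k0 (k0 + n - 1)).card + 1 := by
        exact Nat.add_le_add_right (Finset.card_image_le) 1
    _ ≤ n + 1 := by
        rw [Nat.card_Icc]
        omega

/-- Windows of points of `Σ` satisfy the same switch-count bound. -/
lemma cnt_Sigma (w : ℕ → Fin 2) (hw : w ∈ SigmaSet) (n : ℕ) :
    ((Finset.range (n ^ 3)).filter (fun i => w i ≠ w (i + 1))).card ≤ n + 1 := by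
  set U : Set (ℕ → Fin 2) := ⋂ i ∈ Finset.range (n ^ 3 + 1), (fun u : ℕ → Fin 2 => u i) ⁻¹' {w i}
    with hUdef
  have hU : IsOpen U :=
    isOpen_biInter_finset fun i _ =>
      (continuous_apply i).isOpen_preimage _ (isOpen_discrete _)
  have hwU : w ∈ U := by
    simp [hUdef]
  obtain ⟨u, huU, hu⟩ := mem_closure_iff.mp hw U hU hwU
  obtain ⟨l, v, hv, rfl⟩ := by
    simpa using hu
  have hcoord : ∀ i, i ∈ Finset.range (n ^ 3 + 1) → v (i + l) = w i := by
    intro i hi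
    have := Set.mem_iInter₂.mp huU i hi
    simpa [shiftB_iterate] using this
  have hfilter : (Finset.range (n ^ 3)).filter (fun i => w i ≠ w (i + 1)) =
      (Finset.range (n ^ 3)).filter (fun i => v (i + l) ≠ v (i + l + 1)) := by
    apply Finset.filter_congr
    intro i hi
    have hi' : i < n ^ 3 := Finset.mem_range.mp hi
    have h1 : v (i + l) = w i := hcoord i (Finset.mem_range.mpr (by omega))
    have h2 : v (i + 1 + l) = w (i + 1) := hcoord (i + 1) (Finset.mem_range.mpr (by omega))
    rw [h1.symm, ← h2]
    constructor <;> intro h <;> simpa [show i + 1 + l = i + l + 1 by ring] using h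
  rw [hfilter]
  exact cnt_A v hv l n

lemma eq_dirac_of_ae_eq {α : Type*} [MeasurableSpace α] [MeasurableSingletonClass α]
    (μ : Measure α) [IsProbabilityMeasure μ] (x : α) (h : ∀ᵐ w ∂μ, w = x) :
    μ = Measure.dirac x := by
  have hnull : μ ({x}ᶜ) = 0 := by
    have hs : ({x}ᶜ : Set α) = {w | ¬ w = x} := by ext w; simp
    rw [ae_iff] at h
    rw [hs]
    exact h
  ext t ht
  rw [Measure.dirac_apply' x ht]
  by_cases hx : x ∈ t
  · rw [Set.indicator_of_mem hx]
    have hc : μ tᶜ = 0 := by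
      refine measure_mono_null ?_ hnull
      intro y hy
      simp only [Set.mem_compl_iff, Set.mem_singleton_iff]
      rintro rfl
      exact hy hx
    have := (prob_compl_eq_zero_iff ht).mp hc
    simp [this]
  · rw [Set.indicator_of_notMem hx]
    refine measure_mono_null ?_ hnull
    intro y hy
    simp only [Set.mem_compl_iff, Set.mem_singleton_iff]
    rintro rfl
    exact hx hy

/-- every `σ`-invariant ergodic Borel probability measure on `Σ` is
the Dirac measure at one of the two constant sequences. -/
theorem stmt_11 (μ : Measure (ℕ → Fin 2)) [IsProbabilityMeasure μ]
    (herg : Ergodic shiftB μ) (hsupp : μ SigmaSet = 1) :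
    μ = Measure.dirac (fun _ => (0 : Fin 2)) ∨ μ = Measure.dirac (fun _ => (1 : Fin 2)) := by
  have hmp : MeasurePreserving shiftB μ μ := herg.toMeasurePreserving
  set S : ℕ → Set (ℕ → Fin 2) := fun i => {w | w i ≠ w (i + 1)} with hSdef
  have hSmeas : ∀ i, MeasurableSet (S i) := by
    intro i
    have : S i = {w : ℕ → Fin 2 | w i = w (i + 1)}ᶜ := by
      ext w; simp [hSdef]
    rw [this]
    exact (measurableSet_eq_fun (measurable_pi_apply i) (measurable_pi_apply (i + 1))).compl
  have hSinv : ∀ i, μ (S i) = μ (S 0) := by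
    intro i
    have hpre : S i = shiftB^[i] ⁻¹' (S 0) := by
      ext w
      simp [hSdef, shiftB_iterate, Nat.add_comm]
    rw [hpre, (hmp.iterate i).measure_preimage (hSmeas 0).nullMeasurableSet]
  -- the key estimate
  have hae_Sigma : ∀ᵐ w ∂μ, w ∈ SigmaSet := by
    have hcl : IsClosed SigmaSet := isClosed_closure
    have : μ (SigmaSetᶜ) = 0 := (prob_compl_eq_zero_iff hcl.measurableSet).mpr hsupp
    rw [ae_iff]
    exact this
  have hsum : ∀ n : ℕ, ((n ^ 3 : ℕ) : ℝ≥0∞) * μ (S 0) ≤ ((n + 1 : ℕ) : ℝ≥0∞) := by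
    intro n
    have h1 : ∑ i ∈ Finset.range (n ^ 3), μ (S i) = ((n ^ 3 : ℕ) : ℝ≥0∞) * μ (S 0) := by
      simp [hSinv, Finset.sum_const, nsmul_eq_mul]
    have h2 : ∑ i ∈ Finset.range (n ^ 3), μ (S i)
        = ∫⁻ w, ∑ i ∈ Finset.range (n ^ 3), (S i).indicator (fun _ => (1 : ℝ≥0∞)) w ∂μ := by
      rw [lintegral_finset_sum _ (fun i _ => measurable_const.indicator (hSmeas i))]
      congr 1
      ext i
      rw [lintegral_indicator (hSmeas i)]
      simp
    have h3 : ∀ᵐ w ∂μ, ∑ i ∈ Finset.range (n ^ 3), (S i).indicator (fun _ => (1 : ℝ≥0∞)) w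
        ≤ ((n + 1 : ℕ) : ℝ≥0∞) := by
      filter_upwards [hae_Sigma] with w hw
      have hcard := cnt_Sigma w hw n
      have : ∑ i ∈ Finset.range (n ^ 3), (S i).indicator (fun _ => (1 : ℝ≥0∞)) w
          = (((Finset.range (n ^ 3)).filter (fun i => w i ≠ w (i + 1))).card : ℝ≥0∞) := by
        rw [Finset.card_filter]
        push_cast
        apply Finset.sum_congr rfl
        intro i _
        by_cases h : w i ≠ w (i + 1) <;> simp [Set.indicator_apply, hSdef, h]
      rw [this]
      exact_mod_cast hcard
    have h4 : ∫⁻ w, ∑ i ∈ Finset.range (n ^ 3), (S i).indicator (fun _ => (1 : ℝ≥0∞)) w ∂μ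
        ≤ ((n + 1 : ℕ) : ℝ≥0∞) := by
      calc _ ≤ ∫⁻ _, ((n + 1 : ℕ) : ℝ≥0∞) ∂μ := lintegral_mono_ae h3
        _ = ((n + 1 : ℕ) : ℝ≥0∞) := by simp
    rw [← h1, h2]
    exact h4
  have hS0 : μ (S 0) = 0 := by
    by_contra h
    obtain ⟨m, hm⟩ := ENNReal.exists_inv_nat_lt h
    have hm0 : m ≠ 0 := by
      rintro rfl
      simp at hm
    have hle : ((( 3 * m) ^ 3 : ℕ) : ℝ≥0∞) * (m : ℝ≥0∞)⁻¹
        ≤ (((3 * m) ^ 3 : ℕ) : ℝ≥0∞) * μ (S 0) := mul_le_mul_right hm.le _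
    have heq : (((3 * m) ^ 3 : ℕ) : ℝ≥0∞) * (m : ℝ≥0∞)⁻¹ = ((27 * m ^ 2 : ℕ) : ℝ≥0∞) := by
      have hmm : (m : ℝ≥0∞) * (m : ℝ≥0∞)⁻¹ = 1 :=
        ENNReal.mul_inv_cancel (by exact_mod_cast hm0) (ENNReal.natCast_ne_top m)
      push_cast
      calc (3 * (m : ℝ≥0∞)) ^ 3 * (m : ℝ≥0∞)⁻¹
          = 27 * (m : ℝ≥0∞) ^ 2 * ((m : ℝ≥0∞) * (m : ℝ≥0∞)⁻¹) := by ring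
        _ = 27 * (m : ℝ≥0∞) ^ 2 := by rw [hmm, mul_one]
    have hfinal : ((27 * m ^ 2 : ℕ) : ℝ≥0∞) ≤ ((3 * m + 1 : ℕ) : ℝ≥0∞) :=
      heq ▸ (hle.trans (hsum (3 * m)))
    have : (27 * m ^ 2 : ℕ) ≤ 3 * m + 1 := by exact_mod_cast hfinal
    nlinarith [Nat.one_le_iff_ne_zero.mpr hm0]
  have haeS : ∀ᵐ w ∂μ, ∀ i, w i = w (i + 1) := by
    have : μ (⋃ i, S i) = 0 := measure_iUnion_null fun i => (hSinv i).trans hS0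
    have h2 : {w : ℕ → Fin 2 | ¬ ∀ i, w i = w (i + 1)} = ⋃ i, S i := by
      ext w; simp [hSdef]
    rw [ae_iff, h2]
    exact this
  have haeC : ∀ᵐ w ∂μ, ∀ i, w i = w 0 := by
    filter_upwards [haeS] with w hw
    intro i
    induction i with
    | zero => rfl
    | succ k ih => rw [← hw k, ih]
  -- the invariant set {w | w 0 = 0}
  have hsmeas : MeasurableSet {w : ℕ → Fin 2 | w 0 = 0} :=
    (measurable_pi_apply 0) (measurableSet_singleton 0)
  have hinv : shiftB ⁻¹' {w : ℕ → Fin 2 | w 0 = 0} =ᵐ[μ] {w : ℕ → Fin 2 | w 0 = 0} := by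
    have hpre : shiftB ⁻¹' {w : ℕ → Fin 2 | w 0 = 0} = {w : ℕ → Fin 2 | w 1 = 0} := rfl
    rw [hpre, Filter.eventuallyEq_set]
    filter_upwards [haeS] with w hw
    rw [← hw 0]
  rcases herg.quasiErgodic.ae_mem_or_ae_notMem₀ hsmeas.nullMeasurableSet hinv with h | h
  · left
    apply eq_dirac_of_ae_eq
    filter_upwards [h, haeC] with w h0 hc
    funext i
    rw [hc i]
    exact h0
  · right
    apply eq_dirac_of_ae_eq
    have h2 : ∀ a : Fin 2, a ≠ 0 → a = 1 := by decide
    filter_upwards [h, haeC] with w h0 hc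
    funext i
    rw [hc i]
    exact h2 _ h0
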